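/- Let W be a set of vertices of G₂ with |W| < ∏_{i=1}^{m−1} (p_i − 1), let u be a vertex with Z(u) = {m} that does not lie in W, and let v ∉ W be a vertex of G₂ with m ∈ Z(v). Then v lies in the same connected component as u in the graph G₂ − W obtained by deleting the vertices of W. -/

import Mathlib

open Finset

abbrev NN (m : ℕ) (p : Fin m → ℕ) : ℕ := ∏ i, p i

abbrev Vtx (m : ℕ) (p : Fin m → ℕ) : Type :=
  {x : ZMod (NN m p) // x ≠ 0 ∧ ¬ IsUnit x}

/-- The induced subgraph `G₂` of the comaximal graph of `ℤ/nℤ` on nonzero nonunits. -/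
def G2 (m : ℕ) (p : Fin m → ℕ) : SimpleGraph (Vtx m p) where
  Adj x y := x ≠ y ∧ Ideal.span ({x.1, y.1} : Set (ZMod (NN m p))) = ⊤
  symm := by
    constructor
    rintro x y ⟨hxy, h⟩
    exact ⟨hxy.symm, by rwa [Set.pair_comm]⟩
  loopless := by constructor; rintro x ⟨h, -⟩; exact h rfl

/-- The zero-set of `x`: indices `i` where the image of `x` in `ℤ/p_iℤ` is zero. -/
def Z (m : ℕ) (p : Fin m → ℕ) (x : ZMod (NN m p)) : Finset (Fin m) :=
  Finset.univ.filter fun i =>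
    (ZMod.castHom (Finset.dvd_prod_of_mem p (Finset.mem_univ i)) (ZMod (p i))) x = 0

/-- The class `X_S` of vertices of `G₂` with zero-set `S`. -/
def XS (m : ℕ) (p : Fin m → ℕ) (S : Finset (Fin m)) : Set (Vtx m p) :=
  {x | Z m p x.1 = S}

lemma span_pair_top_iff' {R : Type*} [CommSemiring R] (x y : R) :
    Ideal.span ({x, y} : Set R) = ⊤ ↔ IsCoprime x y := by
  rw [Ideal.eq_top_iff_one, Ideal.mem_span_pair]; exact Iff.rfl

lemma pi_isCoprime_iff' {ι : Type*} {R : ι → Type*} [∀ i, CommSemiring (R i)]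
    (x y : ∀ i, R i) : IsCoprime x y ↔ ∀ i, IsCoprime (x i) (y i) := by
  constructor
  · rintro ⟨a, b, h⟩ i
    exact ⟨a i, b i, congrFun h i⟩
  · intro h
    choose a b hab using h
    exact ⟨a, b, funext hab⟩

lemma pi_isUnit_iff' {ι : Type*} {R : ι → Type*} [∀ i, Monoid (R i)] (f : ∀ i, R i) :
    IsUnit f ↔ ∀ i, IsUnit (f i) := by
  constructor
  · rintro ⟨u, rfl⟩ i
    exact ⟨⟨u.val i, u.inv i, congrFun u.val_inv i, congrFun u.inv_val i⟩, rfl⟩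
  · intro h
    choose g hg using h
    refine ⟨⟨f, fun i => ((g i)⁻¹ : (R i)ˣ), funext fun i => ?_, funext fun i => ?_⟩, rfl⟩
    · show f i * ((g i)⁻¹ : (R i)ˣ) = 1
      rw [← hg i]; exact (g i).mul_inv
    · show ((g i)⁻¹ : (R i)ˣ) * f i = 1
      rw [← hg i]; exact (g i).inv_mul

lemma field_isCoprime_iff' {K : Type*} [Field K] (x y : K) :
    IsCoprime x y ↔ (x ≠ 0 ∨ y ≠ 0) := by
  constructor
  · rintro ⟨a, b, h⟩
    by_contra hc
    push_neg at hc
    rw [hc.1, hc.2] at h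
    simp at h
  · rintro (h | h)
    · exact ⟨x⁻¹, 0, by field_simp; ring⟩
    · exact ⟨0, y⁻¹, by field_simp; ring⟩

theorem stmt11 (m : ℕ) (hm : 2 ≤ m) (p : Fin m → ℕ) (hp : ∀ i, (p i).Prime)
    (hmono : StrictMono p) (W : Set (Vtx m p))
    (hW : W.ncard < ∏ i ∈ Finset.univ.erase (⟨m - 1, by omega⟩ : Fin m), (p i - 1))
    (u : Vtx m p) (hu : Z m p u.1 = {(⟨m - 1, by omega⟩ : Fin m)}) (huW : u ∉ W)
    (v : Vtx m p) (hvW : v ∉ W) (hv : (⟨m - 1, by omega⟩ : Fin m) ∈ Z m p v.1) :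
    ((G2 m p).induce Wᶜ).Reachable ⟨v, hvW⟩ ⟨u, huW⟩ := by
  classical
  haveI : ∀ i, Fact (p i).Prime := fun i => ⟨hp i⟩
  haveI : NeZero (NN m p) :=
    ⟨(Finset.prod_pos (fun i _ => (hp i).pos)).ne'⟩
  set M : Fin m := ⟨m - 1, by omega⟩ with hMdef
  have hpc : Pairwise (Function.onFun Nat.Coprime p) := fun i j hij =>
    (Nat.coprime_primes (hp i) (hp j)).mpr (fun h => hij (hmono.injective h))
  let e : ZMod (NN m p) ≃+* ∀ i, ZMod (p i) := ZMod.prodEquivPi p hpc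
  -- the components of `e` are the cast homs
  have hcomp : ∀ (x : ZMod (NN m p)) (i : Fin m),
      e x i =
        (ZMod.castHom (Finset.dvd_prod_of_mem p (Finset.mem_univ i)) (ZMod (p i))) x := by
    intro x i
    have h := Subsingleton.elim
      ((Pi.evalRingHom (fun i => ZMod (p i)) i).comp (e : ZMod (NN m p) →+* ∀ i, ZMod (p i)))
      (ZMod.castHom (Finset.dvd_prod_of_mem p (Finset.mem_univ i)) (ZMod (p i)))
    exact DFunLike.congr_fun h x
  have hZmem : ∀ (x : ZMod (NN m p)) (i : Fin m), i ∈ Z m p x ↔ e x i = 0 := by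
    intro x i
    rw [Z, Finset.mem_filter, hcomp]
    simp
  have hzero : ∀ x : ZMod (NN m p), x = 0 ↔ ∀ i, e x i = 0 := by
    intro x
    constructor
    · intro h i; rw [h, map_zero]; rfl
    · intro h
      have : e x = 0 := funext h
      have := e.injective (this.trans (map_zero e).symm)
      exact this
  have hunit : ∀ x : ZMod (NN m p), IsUnit x ↔ ∀ i, e x i ≠ 0 := by
    intro x
    constructor
    · intro h i
      have : IsUnit (e x) := h.map e
      rw [pi_isUnit_iff'] at this
      exact (this i).ne_zero
    · intro h
      have : IsUnit (e x) := by
        rw [pi_isUnit_iff']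
        intro i
        exact isUnit_iff_ne_zero.mpr (h i)
      have h2 : IsUnit (e.symm (e x)) := this.map e.symm
      rwa [e.symm_apply_apply] at h2
  have hadj : ∀ x y : Vtx m p, x ≠ y → (∀ i, e x.1 i ≠ 0 ∨ e y.1 i ≠ 0) →
      (G2 m p).Adj x y := by
    intro x y hne h
    refine ⟨hne, ?_⟩
    rw [span_pair_top_iff']
    have : IsCoprime (e x.1) (e y.1) := by
      rw [pi_isCoprime_iff']
      intro i
      rw [field_isCoprime_iff']
      exact h i
    have h2 := this.map (e.symm : (∀ i, ZMod (p i)) →+* ZMod (NN m p))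
    simpa using h2
  -- pick a coordinate where v is nonzero
  have hvM : e v.1 M = 0 := (hZmem v.1 M).mp hv
  have : ¬ ∀ i, e v.1 i = 0 := fun h => v.2.1 ((hzero v.1).mpr h)
  push_neg at this
  obtain ⟨j₀, hj₀⟩ := this
  have hj₀M : j₀ ≠ M := fun h => hj₀ (h ▸ hvM)
  -- the family of candidate middle vertices
  set s : Finset (Fin m) := Finset.univ.erase j₀ with hsdef
  have hMs : M ∈ s := Finset.mem_erase.mpr ⟨hj₀M.symm, Finset.mem_univ M⟩
  let zfun : (∀ i : s, (ZMod (p i.1))ˣ) → ZMod (NN m p) := fun w =>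
    e.symm (fun i => if h : i ∈ s then (w ⟨i, h⟩ : ZMod (p i)) else 0)
  have hz : ∀ w (i : Fin m), e (zfun w) i =
      if h : i ∈ s then (w ⟨i, h⟩ : ZMod (p i)) else 0 := by
    intro w i
    have := e.apply_symm_apply (fun i => if h : i ∈ s then (w ⟨i, h⟩ : ZMod (p i)) else 0)
    exact congrFun this i
  have hzj₀ : ∀ w, e (zfun w) j₀ = 0 := by
    intro w; rw [hz]; simp [hsdef]
  have hzs : ∀ w (i : Fin m), i ≠ j₀ → e (zfun w) i ≠ 0 := by
    intro w i hi
    have his : i ∈ s := Finset.mem_erase.mpr ⟨hi, Finset.mem_univ i⟩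
    rw [hz, dif_pos his]
    exact (w ⟨i, his⟩).ne_zero
  have hzne : ∀ w, zfun w ≠ 0 := by
    intro w h
    exact hzs w M hj₀M.symm (((hzero _).mp h) M)
  have hznu : ∀ w, ¬ IsUnit (zfun w) := by
    intro w h
    exact ((hunit _).mp h j₀) (hzj₀ w)
  let F : (∀ i : s, (ZMod (p i.1))ˣ) → Vtx m p := fun w => ⟨zfun w, hzne w, hznu w⟩
  have hFinj : Function.Injective F := by
    intro w w' h
    have h1 : zfun w = zfun w' := congrArg Subtype.val h
    funext i
    have h2 := congrFun (congrArg e h1) i.1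
    rw [hz, hz, dif_pos i.2, dif_pos i.2] at h2
    exact Units.ext h2
  -- cardinality bound
  have hcard : Fintype.card (∀ i : s, (ZMod (p i.1))ˣ) = ∏ i ∈ s, (p i - 1) := by
    rw [Fintype.card_pi]
    rw [← Finset.prod_coe_sort s (fun i => p i - 1)]
    congr 1
    funext i
    rw [ZMod.card_units_eq_totient, Nat.totient_prime (hp i.1)]
  have hprodle : ∏ i ∈ Finset.univ.erase M, (p i - 1) ≤ ∏ i ∈ s, (p i - 1) := by
    have hj₀mem : j₀ ∈ Finset.univ.erase M := Finset.mem_erase.mpr ⟨hj₀M, Finset.mem_univ j₀⟩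
    have hMmem : M ∈ s := hMs
    rw [← Finset.mul_prod_erase _ _ hj₀mem, ← Finset.mul_prod_erase _ _ hMmem]
    rw [Finset.erase_right_comm]
    have hle : p j₀ - 1 ≤ p M - 1 := by
      have : j₀ ≤ M := by
        rw [Fin.le_def]
        have := j₀.isLt
        simp only [hMdef]
        omega
      exact Nat.sub_le_sub_right (hmono.monotone this) 1
    exact Nat.mul_le_mul_right _ hle
  -- find a middle vertex not in W
  have hWfin : W.Finite := Set.toFinite W
  have : ∃ w, F w ∉ W := by
    by_contra hcon
    push_neg at hcon
    have hsub : Set.range F ⊆ W := by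
      rintro x ⟨w, rfl⟩; exact hcon w
    have h1 : (Set.range F).ncard ≤ W.ncard := Set.ncard_le_ncard hsub hWfin
    have h2 : (Set.range F).ncard = Fintype.card (∀ i : s, (ZMod (p i.1))ˣ) := by
      rw [Set.ncard_eq_toFinset_card', Set.toFinset_range,
        Finset.card_image_of_injective _ hFinj, Finset.card_univ]
    omega
  obtain ⟨w, hwW⟩ := this
  -- build the path v - F w - u
  have huM : e u.1 M = 0 := (hZmem u.1 M).mp (by rw [hu]; exact Finset.mem_singleton_self M)
  have huoth : ∀ i, i ≠ M → e u.1 i ≠ 0 := by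
    intro i hi h
    have := (hZmem u.1 i).mpr h
    rw [hu, Finset.mem_singleton] at this
    exact hi this
  have hne1 : v ≠ F w := by
    intro h
    apply hzs w M hj₀M.symm
    rw [← congrArg (fun x : Vtx m p => e x.1 M) h]
    exact hvM
  have hne2 : F w ≠ u := by
    intro h
    apply hzs w M hj₀M.symm
    rw [congrArg (fun x : Vtx m p => e x.1 M) h]
    exact huM
  have hadj1 : (G2 m p).Adj v (F w) := by
    apply hadj v (F w) hne1
    intro i
    by_cases h : e v.1 i = 0
    · right
      have hiv : i ∈ Z m p v.1 := (hZmem v.1 i).mpr h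
      have hij : i ≠ j₀ := by
        intro hh; rw [hh] at h; exact hj₀ h
      exact hzs w i hij
    · left; exact h
  have hadj2 : (G2 m p).Adj (F w) u := by
    apply hadj (F w) u hne2
    intro i
    by_cases h : i = M
    · left; rw [h]; exact hzs w M hj₀M.symm
    · right; exact huoth i h
  -- transfer to the induced graph
  have hadj1' : ((G2 m p).induce Wᶜ).Adj ⟨v, hvW⟩ ⟨F w, hwW⟩ := hadj1
  have hadj2' : ((G2 m p).induce Wᶜ).Adj ⟨F w, hwW⟩ ⟨u, huW⟩ := hadj2
  exact hadj1'.reachable.trans hadj2'.reachable
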